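/- Let σ be a Hermitian 2×2 complex matrix, x ∈ M, X = φ(x) and U = ψ(x). Then for all real τ in some neighborhood of 0 the unitary matrix e^{iτσ}U satisfies det(I − e^{iτσ}U) ≠ 0, so X(τ) = i(I + e^{iτσ}U)(I − e^{iτσ}U)⁻¹ is a well-defined Hermitian matrix with X(0) = X, and its derivative at τ = 0 equals (i/2)(σX − Xσ) + (1/2)σ + (1/2)XσX. (These are the conformal Killing vector fields on Minkowski space generated by the left action of one-parameter subgroups of U(2) on itself.) -/

import Mathlib

noncomputable section

open Matrix Complex NormedSpace

abbrev Mat2 := Matrix (Fin 2) (Fin 2) ℂ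

/-- Minkowski quadratic form on ℝ⁴. -/
def mq (x : Fin 4 → ℝ) : ℝ := -(x 0)^2 + (x 1)^2 + (x 2)^2 + (x 3)^2

/-- The isomorphism of Minkowski space with Hermitian 2×2 matrices. -/
def mphi (x : Fin 4 → ℝ) : Mat2 :=
  !![(x 0 : ℂ) + (x 3 : ℂ), (x 1 : ℂ) - Complex.I * (x 2 : ℂ);
     (x 1 : ℂ) + Complex.I * (x 2 : ℂ), (x 0 : ℂ) - (x 3 : ℂ)]

/-- The Cayley transform. -/
def cayley (X : Mat2) : Mat2 := (X - Complex.I • 1) * (X + Complex.I • 1)⁻¹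

/-- ψ = u ∘ φ : M → U(2). -/
def mpsi (x : Fin 4 → ℝ) : Mat2 := cayley (mphi x)

/-- The curve τ ↦ X(τ) = i (I + e^{iτσ}U)(I − e^{iτσ}U)⁻¹ obtained by inverse Cayley
transforming the left translate e^{iτσ}·ψ(x). -/
def Xcurve (σ : Mat2) (x : Fin 4 → ℝ) (τ : ℝ) : Mat2 :=
  Complex.I • ((1 + NormedSpace.exp ((Complex.I * (τ : ℂ)) • σ) * mpsi x) *
    (1 - NormedSpace.exp ((Complex.I * (τ : ℂ)) • σ) * mpsi x)⁻¹)

attribute [local instance] Matrix.linftyOpSemiNormedRing Matrix.linftyOpNormedRing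
  Matrix.linftyOpNormedAlgebra

lemma mphi_herm (x : Fin 4 → ℝ) : (mphi x)ᴴ = mphi x := by
  ext i j
  fin_cases i <;> fin_cases j <;>
    simp [mphi, Matrix.conjTranspose_apply, Complex.ext_iff]

lemma det_mphi_addI (x : Fin 4 → ℝ) : (mphi x + Complex.I • 1).det ≠ 0 := by
  intro h
  rw [Matrix.det_fin_two] at h
  simp only [mphi, Matrix.add_apply, Matrix.smul_apply, Matrix.one_apply,
    Matrix.cons_val', Matrix.cons_val_zero, Matrix.cons_val_one, Matrix.head_cons,
    Matrix.head_fin_const, Matrix.empty_val', Matrix.cons_val_fin_one] at h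
  simp only [Complex.ext_iff] at h
  norm_num [Complex.add_re, Complex.add_im, Complex.mul_re, Complex.mul_im] at h
  obtain ⟨h1, h2⟩ := h
  nlinarith [sq_nonneg (x 1), sq_nonneg (x 2), sq_nonneg (x 3), sq_nonneg (x 0)]

/-- The entry map as a continuous linear map over ℝ. -/
def entryCLM (i j : Fin 2) : Mat2 →L[ℝ] ℂ :=
  LinearMap.toContinuousLinearMap
    { toFun := fun M => M i j
      map_add' := fun _ _ => rfl
      map_smul' := fun _ _ => rfl }

lemma herm_of_unitary (A : Mat2) (h1 : Aᴴ * A = 1) (hdet : (1 - A).det ≠ 0) :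
    (Complex.I • ((1 + A) * (1 - A)⁻¹)).IsHermitian := by
  have hdet' : IsUnit (1 - A).det := isUnit_iff_ne_zero.mpr hdet
  have hH : (1 - A)ᴴ = 1 - Aᴴ := by simp
  have hdetH : IsUnit (1 - Aᴴ).det := by
    rw [← hH, Matrix.det_conjTranspose]; exact hdet'.star
  have hkey : (1 + Aᴴ) * (1 - A) = -((1 - Aᴴ) * (1 + A)) := by
    simp only [Matrix.add_mul, Matrix.mul_sub, Matrix.sub_mul, Matrix.mul_add,
      Matrix.one_mul, Matrix.mul_one, h1]
    abel
  have hmain : (1 - Aᴴ)⁻¹ * (1 + Aᴴ) = -((1 + A) * (1 - A)⁻¹) := by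
    have e1 : (1 - Aᴴ)⁻¹ * ((1 + Aᴴ) * (1 - A)) * (1 - A)⁻¹ = (1 - Aᴴ)⁻¹ * (1 + Aᴴ) := by
      rw [Matrix.mul_assoc ((1 - Aᴴ)⁻¹), Matrix.mul_assoc (1 + Aᴴ),
        Matrix.mul_nonsing_inv _ hdet', Matrix.mul_one]
    rw [← e1, hkey]
    rw [Matrix.mul_neg, Matrix.neg_mul, ← Matrix.mul_assoc,
      Matrix.nonsing_inv_mul _ hdetH, Matrix.one_mul]
  show (Complex.I • ((1 + A) * (1 - A)⁻¹))ᴴ = _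
  rw [conjTranspose_smul, conjTranspose_mul, Matrix.conjTranspose_nonsing_inv, hH,
    conjTranspose_add, conjTranspose_one, hmain, Complex.star_def, Complex.conj_I]
  rw [smul_neg, neg_smul, neg_neg]

theorem stmt18 (σ : Mat2) (hσ : σ.IsHermitian) (x : Fin 4 → ℝ) :
    ∃ ε > 0,
      (∀ τ : ℝ, |τ| < ε →
        (1 - NormedSpace.exp ((Complex.I * (τ : ℂ)) • σ) * mpsi x).det ≠ 0 ∧
        (Xcurve σ x τ).IsHermitian) ∧
      Xcurve σ x 0 = mphi x ∧
      (∀ i j : Fin 2,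
        HasDerivAt (fun τ : ℝ => Xcurve σ x τ i j)
          (((Complex.I / 2) • (σ * mphi x - mphi x * σ) +
            (1/2 : ℂ) • σ + (1/2 : ℂ) • (mphi x * σ * mphi x)) i j) 0) := by
  have hXh : (mphi x)ᴴ = mphi x := mphi_herm x
  set X : Mat2 := mphi x with hXdef
  set P : Mat2 := X + Complex.I • 1 with hPdef
  set Q : Mat2 := X - Complex.I • 1 with hQdef
  set U : Mat2 := mpsi x with hUdef
  have hU : U = Q * P⁻¹ := rfl
  have hQP : Pᴴ = Q := by
    rw [hPdef, hQdef, conjTranspose_add, hXh, conjTranspose_smul, conjTranspose_one,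
      Complex.star_def, Complex.conj_I, neg_smul, ← sub_eq_add_neg]
  have hQH : Qᴴ = P := by rw [← hQP, conjTranspose_conjTranspose]
  have hPdet : IsUnit P.det := isUnit_iff_ne_zero.mpr (det_mphi_addI x)
  have hQdet : IsUnit Q.det := by
    rw [← hQP, Matrix.det_conjTranspose]; exact hPdet.star
  have hPQ : P * Q = Q * P := by
    rw [hPdef, hQdef]
    simp only [Matrix.mul_sub, Matrix.sub_mul, Matrix.mul_add, Matrix.add_mul,
      Matrix.mul_smul, Matrix.smul_mul, Matrix.mul_one, Matrix.one_mul]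
    module
  have hUP : U * P = Q := by
    rw [hU, Matrix.mul_assoc, Matrix.nonsing_inv_mul P hPdet, Matrix.mul_one]
  have hPU : P * U = Q := by
    rw [hU, ← Matrix.mul_assoc, hPQ, Matrix.mul_assoc,
      Matrix.mul_nonsing_inv P hPdet, Matrix.mul_one]
  have hPsubQ : P - Q = (2 * Complex.I) • (1 : Mat2) := by
    rw [hPdef, hQdef]; module
  have hPaddQ : P + Q = (2 : ℂ) • X := by
    rw [hPdef, hQdef]; module
  set B : Mat2 := (-(Complex.I)/2) • P with hBdef
  have hVB : (1 - U) * B = 1 := by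
    rw [hBdef, Matrix.mul_smul, Matrix.sub_mul, Matrix.one_mul, hUP, hPsubQ, smul_smul]
    rw [show (-(Complex.I)/2) * (2 * Complex.I) = 1 by
      linear_combination (-1 : ℂ) * Complex.I_sq]
    rw [one_smul]
  have hBV : B * (1 - U) = 1 := by
    rw [hBdef, Matrix.smul_mul, Matrix.mul_sub, Matrix.mul_one, hPU, hPsubQ, smul_smul]
    rw [show (-(Complex.I)/2) * (2 * Complex.I) = 1 by
      linear_combination (-1 : ℂ) * Complex.I_sq]
    rw [one_smul]
  have hVdet : IsUnit (1 - U).det := Matrix.isUnit_det_of_right_inverse hVB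
  have hVinv : (1 - U)⁻¹ = B := Matrix.inv_eq_right_inv hVB
  have hUB : (1 + U) * B = (-Complex.I) • X := by
    rw [hBdef, Matrix.mul_smul, Matrix.add_mul, Matrix.one_mul, hUP, hPaddQ, smul_smul]
    congr 1
    ring
  -- unitarity of U
  have hUH : Uᴴ = Q⁻¹ * P := by
    rw [hU, conjTranspose_mul, Matrix.conjTranspose_nonsing_inv, hQP, hQH]
  have hUU1 : Uᴴ * U = 1 := by
    rw [hUH, hU, Matrix.mul_assoc, ← Matrix.mul_assoc P Q P⁻¹, hPQ,
      Matrix.mul_assoc Q P P⁻¹, Matrix.mul_nonsing_inv P hPdet, Matrix.mul_one,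
      Matrix.nonsing_inv_mul Q hQdet]
  have hU1U : U * Uᴴ = 1 := by
    have hinvc : P⁻¹ * Q⁻¹ = Q⁻¹ * P⁻¹ := by
      rw [← Matrix.mul_inv_rev, ← Matrix.mul_inv_rev, hPQ]
    rw [hUH, hU, Matrix.mul_assoc, ← Matrix.mul_assoc P⁻¹ Q⁻¹ P, hinvc,
      Matrix.mul_assoc Q⁻¹ P⁻¹ P, Matrix.nonsing_inv_mul P hPdet, Matrix.mul_one,
      Matrix.mul_nonsing_inv Q hQdet]
  -- exp facts
  have hMH : ∀ τ : ℝ, ((Complex.I * (τ:ℂ)) • σ)ᴴ = -((Complex.I * (τ:ℂ)) • σ) := by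
    intro τ
    rw [conjTranspose_smul, hσ.eq,
      show star (Complex.I * (τ:ℂ)) = -(Complex.I * (τ:ℂ)) by simp [Complex.ext_iff],
      neg_smul]
  have hEH : ∀ τ : ℝ, (NormedSpace.exp ((Complex.I * (τ:ℂ)) • σ))ᴴ * NormedSpace.exp ((Complex.I * (τ:ℂ)) • σ) = 1 := by
    intro τ
    rw [← Matrix.exp_conjTranspose, hMH τ,
      ← Matrix.exp_add_of_commute _ _ ((Commute.refl ((Complex.I * (τ:ℂ)) • σ)).neg_left),
      neg_add_cancel, NormedSpace.exp_zero]
  have hEH' : ∀ τ : ℝ, NormedSpace.exp ((Complex.I * (τ:ℂ)) • σ) * (NormedSpace.exp ((Complex.I * (τ:ℂ)) • σ))ᴴ = 1 := by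
    intro τ
    rw [← Matrix.exp_conjTranspose, hMH τ,
      ← Matrix.exp_add_of_commute _ _ ((Commute.refl ((Complex.I * (τ:ℂ)) • σ)).neg_right),
      add_neg_cancel, NormedSpace.exp_zero]
  have hE0 : NormedSpace.exp ((Complex.I * ((0:ℝ):ℂ)) • σ) = 1 := by
    norm_num [NormedSpace.exp_zero]
  -- derivative of exp
  have hEd : HasDerivAt (fun τ : ℝ => NormedSpace.exp ((Complex.I * (τ : ℂ)) • σ))
      (Complex.I • σ) 0 := by
    have h0 : (fun τ : ℝ => NormedSpace.exp ((Complex.I * (τ : ℂ)) • σ))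
        = fun τ : ℝ => NormedSpace.exp (τ • (Complex.I • σ)) := by
      funext τ
      congr 1
      rw [mul_comm, mul_smul, ← Complex.coe_algebraMap, algebraMap_smul]
    rw [h0]
    have h1 := hasDerivAt_exp_smul_const' (𝕂 := ℝ) (Complex.I • σ) (0 : ℝ)
    simp only [zero_smul, NormedSpace.exp_zero, mul_one] at h1
    exact h1
  have hg : HasDerivAt (fun τ : ℝ => NormedSpace.exp ((Complex.I * (τ : ℂ)) • σ) * U)
      ((Complex.I • σ) * U) 0 := hEd.mul_const U
  have hd : HasDerivAt (fun τ : ℝ => (1 : Mat2) - NormedSpace.exp ((Complex.I * (τ : ℂ)) • σ) * U)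
      (-((Complex.I • σ) * U)) 0 := hg.const_sub 1
  set Vu : Mat2ˣ := ⟨1 - U, B, hVB, hBV⟩ with hVu
  have hL := hasFDerivAt_ringInverse (𝕜 := ℝ) (R := Mat2) Vu
  have hval : (1 : Mat2) - NormedSpace.exp ((Complex.I * ((0:ℝ) : ℂ)) • σ) * U = (Vu : Mat2) := by
    rw [hE0, Matrix.one_mul]
  have hinv : HasDerivAt
      (fun τ : ℝ => Ring.inverse ((1 : Mat2) - NormedSpace.exp ((Complex.I * (τ : ℂ)) • σ) * U))
      (B * ((Complex.I • σ) * U) * B) 0 := by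
    rw [← hval] at hL
    have h := hL.comp_hasDerivAt (0 : ℝ) hd
    refine h.congr_deriv (Eq.symm ?_)
    simp only [ContinuousLinearMap.neg_apply, ContinuousLinearMap.mulLeftRight_apply,
      mul_neg, neg_mul, neg_neg]
    rfl
  have hplus : HasDerivAt (fun τ : ℝ => (1 : Mat2) + NormedSpace.exp ((Complex.I * (τ : ℂ)) • σ) * U)
      ((Complex.I • σ) * U) 0 := hg.const_add 1
  have hprod := hplus.mul hinv
  have hRinv : Ring.inverse ((1 : Mat2) - U) = B := by
    rw [← Matrix.nonsing_inv_eq_ringInverse, hVinv]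
  simp only [hE0, Matrix.one_mul, hRinv] at hprod
  have hsm := hprod.const_smul Complex.I
  -- identify with Xcurve
  have hXcEq : (fun τ : ℝ => Xcurve σ x τ) = fun τ : ℝ =>
      Complex.I • (((1 : Mat2) + NormedSpace.exp ((Complex.I * (τ : ℂ)) • σ) * U) *
        Ring.inverse ((1 : Mat2) - NormedSpace.exp ((Complex.I * (τ : ℂ)) • σ) * U)) := by
    funext τ
    rw [Xcurve, ← hUdef, Matrix.nonsing_inv_eq_ringInverse]
  -- the algebraic identity for the derivative
  have hSB : ((Complex.I • σ) * U) * B = (1/2 : ℂ) • (σ * Q) := by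
    rw [hBdef, Matrix.smul_mul, Matrix.smul_mul, Matrix.mul_smul, smul_smul,
      Matrix.mul_assoc, hUP]
    congr 1
    linear_combination (-1/2 : ℂ) * Complex.I_sq
  have hBSB : (1 + U) * (B * ((Complex.I • σ) * U) * B) = (-(Complex.I)/2) • (X * (σ * Q)) := by
    rw [Matrix.mul_assoc B, hSB, Matrix.mul_smul, Matrix.mul_smul, ← Matrix.mul_assoc,
      hUB, Matrix.smul_mul, smul_smul]
    congr 1
    ring
  have halg : Complex.I • (((Complex.I • σ) * U) * B + (1 + U) * (B * ((Complex.I • σ) * U) * B))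
      = (Complex.I / 2) • (σ * X - X * σ) + (1/2 : ℂ) • σ + (1/2 : ℂ) • (X * σ * X) := by
    rw [hSB, hBSB, hQdef]
    simp only [Matrix.mul_sub, Matrix.sub_mul, Matrix.mul_smul, Matrix.smul_mul,
      Matrix.mul_one, smul_sub, smul_add, smul_smul, Matrix.mul_assoc]
    match_scalars
    all_goals simp [Complex.ext_iff]
    all_goals norm_num
  have hD : HasDerivAt (fun τ : ℝ => Xcurve σ x τ)
      ((Complex.I / 2) • (σ * X - X * σ) + (1/2 : ℂ) • σ + (1/2 : ℂ) • (X * σ * X)) 0 := by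
    rw [hXcEq, ← halg]
    exact hsm
  -- continuity of the determinant
  have hVc : ContinuousAt (fun τ : ℝ => (1 : Mat2) - NormedSpace.exp ((Complex.I * (τ : ℂ)) • σ) * U) 0 :=
    hd.continuousAt
  have hdetc : ContinuousAt
      (fun τ : ℝ => ((1 : Mat2) - NormedSpace.exp ((Complex.I * (τ : ℂ)) • σ) * U).det) 0 := by
    simp only [Matrix.det_fin_two]
    exact (((((entryCLM 0 0).continuous.continuousAt.comp hVc).mul
      ((entryCLM 1 1).continuous.continuousAt.comp hVc)).sub
      (((entryCLM 0 1).continuous.continuousAt.comp hVc).mul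
      ((entryCLM 1 0).continuous.continuousAt.comp hVc))))
  have hne : ((1 : Mat2) - NormedSpace.exp ((Complex.I * ((0:ℝ) : ℂ)) • σ) * U).det ≠ 0 := by
    rw [hval]
    exact hVdet.ne_zero
  obtain ⟨ε, hε, hball⟩ := Metric.eventually_nhds_iff.mp (hdetc.eventually_ne hne)
  refine ⟨ε, hε, fun τ hτ => ?_, ?_, ?_⟩
  · have hdτ : ((1 : Mat2) - NormedSpace.exp ((Complex.I * (τ : ℂ)) • σ) * U).det ≠ 0 := by
      apply hball
      rwa [Real.dist_eq, sub_zero]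
    refine ⟨hdτ, ?_⟩
    have hA1 : (NormedSpace.exp ((Complex.I * (τ : ℂ)) • σ) * U)ᴴ * (NormedSpace.exp ((Complex.I * (τ : ℂ)) • σ) * U) = 1 := by
      rw [conjTranspose_mul, Matrix.mul_assoc,
        ← Matrix.mul_assoc ((NormedSpace.exp ((Complex.I * (τ : ℂ)) • σ))ᴴ), hEH τ,
        Matrix.one_mul, hUU1]
    have := herm_of_unitary (NormedSpace.exp ((Complex.I * (τ : ℂ)) • σ) * U) hA1 hdτ
    rw [Xcurve, ← hUdef]
    exact this
  · show Xcurve σ x 0 = X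
    rw [Xcurve, ← hUdef, hE0, Matrix.one_mul, hVinv, hUB, smul_smul,
      show Complex.I * -Complex.I = 1 from by linear_combination (-1 : ℂ) * Complex.I_sq,
      one_smul]
  · intro i j
    exact (entryCLM i j).hasFDerivAt.comp_hasDerivAt 0 hD
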